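/- arXiv:1709.00448 — 3 statements merged into one kernel-verified Lean document; each statement's English description precedes it below -/
import Mathlib

section
/- For every real λ ≥ 0 and every 0 < s < 1, the integral ∫_0^∞ (e^{-tλ} − 1) t^{-1-s} dt converges absolutely and λ^s = (1/Γ(-s)) ∫_0^∞ (e^{-tλ} − 1) t^{-1-s} dt. -/
open MeasureTheory Set Filter Real Topology

section aux

variable {lam s : ℝ}

/-- Integrability of the main integrand. -/
lemma stmt2_integrable (hlam : 0 ≤ lam) (hs0 : 0 < s) (hs1 : s < 1) :
    IntegrableOn (fun t : ℝ => (Real.exp (-t * lam) - 1) * t ^ (-1 - s)) (Set.Ioi 0) := by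
  have hmeas : Measurable (fun t : ℝ => (Real.exp (-t * lam) - 1) * t ^ (-1 - s)) := by
    fun_prop
  rw [← Ioc_union_Ioi_eq_Ioi (zero_le_one : (0:ℝ) ≤ 1), integrableOn_union]
  constructor
  · -- near 0 : |e^{-tλ} - 1| ≤ t λ
    have hint : IntegrableOn (fun t : ℝ => lam * t ^ (-s)) (Ioc (0:ℝ) 1) := by
      have := (intervalIntegral.intervalIntegrable_rpow' (a := 0) (b := 1) (show (-1:ℝ) < -s by linarith))
      rw [intervalIntegrable_iff_integrableOn_Ioc_of_le zero_le_one] at this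
      exact this.const_mul lam
    refine Integrable.mono' hint (hmeas.aestronglyMeasurable.restrict) ?_
    filter_upwards [ae_restrict_mem measurableSet_Ioc] with t ht
    have ht0 : 0 < t := ht.1
    have hexple : Real.exp (-t * lam) ≤ 1 := by
      rw [← Real.exp_zero]
      apply Real.exp_le_exp.2
      nlinarith
    have h1 : 1 - Real.exp (-t * lam) ≤ t * lam := by
      have := Real.add_one_le_exp (-t * lam)
      linarith
    have hrp : (0:ℝ) ≤ t ^ (-1 - s) := Real.rpow_nonneg ht0.le _
    rw [norm_mul, Real.norm_of_nonneg hrp, Real.norm_eq_abs, abs_of_nonpos (by linarith)]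
    have : (1 - Real.exp (-t * lam)) * t ^ (-1 - s) ≤ (t * lam) * t ^ (-1 - s) :=
      mul_le_mul_of_nonneg_right h1 hrp
    calc -(Real.exp (-t * lam) - 1) * t ^ (-1 - s)
        = (1 - Real.exp (-t * lam)) * t ^ (-1 - s) := by ring
      _ ≤ (t * lam) * t ^ (-1 - s) := this
      _ = lam * (t ^ (1:ℝ) * t ^ (-1 - s)) := by rw [Real.rpow_one]; ring
      _ = lam * t ^ (-s) := by
          rw [← Real.rpow_add ht0, show (1:ℝ) + (-1 - s) = -s by ring]
  · -- near ∞ : |e^{-tλ} - 1| ≤ 1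
    have hint : IntegrableOn (fun t : ℝ => t ^ (-1 - s)) (Ioi (1:ℝ)) :=
      integrableOn_Ioi_rpow_of_lt (by linarith) zero_lt_one
    refine Integrable.mono' hint (hmeas.aestronglyMeasurable.restrict) ?_
    filter_upwards [ae_restrict_mem measurableSet_Ioi] with t ht
    have ht0 : (0:ℝ) < t := lt_trans zero_lt_one ht
    have hexple : Real.exp (-t * lam) ≤ 1 := by
      rw [← Real.exp_zero]
      apply Real.exp_le_exp.2
      nlinarith
    have hrp : (0:ℝ) ≤ t ^ (-1 - s) := Real.rpow_nonneg ht0.le _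
    rw [norm_mul, Real.norm_of_nonneg hrp, Real.norm_eq_abs, abs_of_nonpos (by linarith)]
    have h1 : -(Real.exp (-t * lam) - 1) ≤ 1 := by
      have := Real.exp_nonneg (-t * lam)
      linarith
    nlinarith


/-- Value of the integral for positive `lam`. -/
lemma stmt2_value (hlam' : 0 < lam) (hs0 : 0 < s) (hs1 : s < 1) :
    ∫ t in Set.Ioi (0:ℝ), (Real.exp (-t * lam) - 1) * t ^ (-1 - s)
      = lam ^ s * Real.Gamma (-s) := by
  have hlam : 0 ≤ lam := hlam'.le
  set F : ℝ → ℝ := fun t => (Real.exp (-t * lam) - 1) * t ^ (-1 - s) with hFdef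
  set E : ℝ → ℝ := fun t => t ^ (-s) * Real.exp (-(lam * t)) with hEdef
  set G : ℝ → ℝ := fun t => (1 - Real.exp (-t * lam)) * t ^ (-s) / s with hGdef
  have hF : IntegrableOn F (Ioi 0) := stmt2_integrable hlam hs0 hs1
  have hE : IntegrableOn E (Ioi 0) := by
    have h := integrableOn_rpow_mul_exp_neg_mul_rpow (show (-1:ℝ) < -s by linarith)
      zero_lt_one hlam'
    refine h.congr_fun (fun x hx => ?_) measurableSet_Ioi
    rw [hEdef]
    simp [Real.rpow_one, neg_mul]
  -- derivative of G
  have hGderiv : ∀ x : ℝ, 0 < x → HasDerivAt G (F x + (lam / s) * E x) x := by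
    intro x hx
    have h1 : HasDerivAt (fun t : ℝ => 1 - Real.exp (-t * lam))
        (Real.exp (-x * lam) * lam) x := by
      have hd : HasDerivAt (fun t : ℝ => -t * lam) (-1 * lam) x :=
        ((hasDerivAt_id x).neg).mul_const lam
      have h2 := (hd.exp).const_sub 1
      exact h2.congr_deriv (by ring)
    have h2 : HasDerivAt (fun t : ℝ => t ^ (-s)) (-s * x ^ (-s - 1)) x :=
      Real.hasDerivAt_rpow_const (Or.inl hx.ne')
    have h3 := (h1.mul h2).div_const s
    refine h3.congr_deriv ?_
    rw [hFdef, hEdef]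
    simp only
    rw [show (-1:ℝ) - s = -s - 1 by ring, show -(lam * x) = -x * lam by ring]
    field_simp
    try ring
  -- G tends to 0 at infinity
  have hexp0 : Tendsto (fun t : ℝ => Real.exp (-t * lam)) atTop (𝓝 0) := by
    apply Real.tendsto_exp_atBot.comp
    exact Tendsto.atBot_mul_const hlam' tendsto_neg_atTop_atBot
  have hGtop : Tendsto G atTop (𝓝 0) := by
    have h := (((tendsto_const_nhds (x := (1:ℝ))).sub hexp0).mul (tendsto_rpow_neg_atTop hs0)).div_const s
    rw [hGdef]
    simpa using h
  -- key identity on Ioi a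
  have hkey : ∀ a : ℝ, 0 < a →
      ∫ t in Ioi a, F t = -(G a) - (lam / s) * ∫ t in Ioi a, E t := by
    intro a ha
    have hFa : IntegrableOn F (Ioi a) := hF.mono_set (Ioi_subset_Ioi ha.le)
    have hEa : IntegrableOn E (Ioi a) := hE.mono_set (Ioi_subset_Ioi ha.le)
    have hderiv : ∀ x ∈ Ici a, HasDerivAt G (F x + (lam / s) * E x) x :=
      fun x hx => hGderiv x (lt_of_lt_of_le ha hx)
    have hint : IntegrableOn (fun x => F x + (lam / s) * E x) (Ioi a) :=
      hFa.add (hEa.const_mul _)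
    have h := integral_Ioi_of_hasDerivAt_of_tendsto' hderiv hint hGtop
    rw [integral_add hFa (hEa.const_mul _), integral_const_mul] at h
    linarith [h]
  -- the sequence aₙ = 1/(n+1)
  set a : ℕ → ℝ := fun n => 1 / ((n : ℝ) + 1) with hadef
  have hapos : ∀ n, 0 < a n := fun n => by positivity
  have hmono : Monotone fun n : ℕ => Ioi (a n) := by
    intro m n hmn
    apply Ioi_subset_Ioi
    rw [hadef]
    simp only
    gcongr <;> exact_mod_cast hmn
  have hU : (⋃ n : ℕ, Ioi (a n)) = Ioi (0:ℝ) := by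
    ext x
    simp only [mem_iUnion, mem_Ioi]
    constructor
    · rintro ⟨n, hn⟩
      exact lt_trans (hapos n) hn
    · intro hx
      obtain ⟨n, hn⟩ := exists_nat_gt (1 / x)
      refine ⟨n, ?_⟩
      rw [hadef]
      simp only
      rw [div_lt_iff₀ (by positivity : (0:ℝ) < (n:ℝ) + 1)]
      rw [div_lt_iff₀ hx] at hn
      nlinarith
  have hFlim : Tendsto (fun n => ∫ t in Ioi (a n), F t) atTop (𝓝 (∫ t in Ioi 0, F t)) := by
    have h := tendsto_setIntegral_of_monotone (fun n => measurableSet_Ioi) hmono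
      (by rw [hU]; exact hF)
    rwa [hU] at h
  have hElim : Tendsto (fun n => ∫ t in Ioi (a n), E t) atTop (𝓝 (∫ t in Ioi 0, E t)) := by
    have h := tendsto_setIntegral_of_monotone (fun n => measurableSet_Ioi) hmono
      (by rw [hU]; exact hE)
    rwa [hU] at h
  have hGlim : Tendsto (fun n => G (a n)) atTop (𝓝 0) := by
    have hB : Tendsto (fun n => lam * (a n) ^ (1 - s) / s) atTop (𝓝 0) := by
      have h0 : Tendsto (fun n : ℕ => 1 / ((n : ℝ) + 1)) atTop (𝓝 0) :=
        tendsto_one_div_add_atTop_nhds_zero_nat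
      have h1 := h0.rpow_const (Or.inr (by linarith : (0:ℝ) ≤ 1 - s))
      rw [Real.zero_rpow (by linarith : 1 - s ≠ 0)] at h1
      simpa [hadef, one_div] using (h1.const_mul lam).div_const s
    refine squeeze_zero (fun n => ?_) (fun n => ?_) hB
    · rw [hGdef]
      simp only
      have he : Real.exp (-(a n) * lam) ≤ 1 := by
        rw [← Real.exp_zero]
        apply Real.exp_le_exp.2
        nlinarith [hapos n]
      have hrp := Real.rpow_nonneg (hapos n).le (-s)
      have h1 : 0 ≤ 1 - Real.exp (-(a n) * lam) := by linarith
      exact div_nonneg (mul_nonneg h1 hrp) hs0.le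
    · rw [hGdef]
      simp only
      have hpos := hapos n
      have h1 : 1 - Real.exp (-(a n) * lam) ≤ a n * lam := by
        have := Real.add_one_le_exp (-(a n) * lam)
        linarith
      have hrp : (0:ℝ) ≤ (a n) ^ (-s) := Real.rpow_nonneg hpos.le _
      have h2 : (1 - Real.exp (-(a n) * lam)) * (a n) ^ (-s)
          ≤ (a n * lam) * (a n) ^ (-s) := mul_le_mul_of_nonneg_right h1 hrp
      have h3 : (a n * lam) * (a n) ^ (-s) = lam * (a n) ^ (1 - s) := by
        rw [show (1:ℝ) - s = 1 + (-s) by ring, Real.rpow_add hpos, Real.rpow_one]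
        ring
      exact div_le_div_of_nonneg_right (h2.trans_eq h3) hs0.le
  -- pass to the limit in the key identity
  have hRlim : Tendsto (fun n => -(G (a n)) - (lam / s) * ∫ t in Ioi (a n), E t) atTop
      (𝓝 (-(0:ℝ) - (lam / s) * ∫ t in Ioi 0, E t)) :=
    (hGlim.neg).sub (hElim.const_mul _)
  have hFinal : ∫ t in Ioi 0, F t = -(0:ℝ) - (lam / s) * ∫ t in Ioi 0, E t :=
    tendsto_nhds_unique (hFlim.congr (fun n => hkey (a n) (hapos n))) hRlim
  -- evaluate the remaining Gamma integral
  have hEval : ∫ t in Ioi 0, E t = (1 / lam) ^ (1 - s) * Real.Gamma (1 - s) := by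
    have h := Real.integral_rpow_mul_exp_neg_mul_Ioi (show (0:ℝ) < 1 - s by linarith) hlam'
    rw [show (1:ℝ) - s - 1 = -s by ring] at h
    rw [hEdef]
    exact h
  have hone : (1 / lam) ^ (1 - s) = lam ^ (s - 1) := by
    rw [one_div, Real.inv_rpow hlam, ← Real.rpow_neg hlam, show -(1 - s) = s - 1 by ring]
  have hG1 : Real.Gamma (1 - s) = -s * Real.Gamma (-s) := by
    rw [show (1:ℝ) - s = -s + 1 by ring, Real.Gamma_add_one (by linarith : -s ≠ 0)]
  have hls : lam ^ s = lam * lam ^ (s - 1) := by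
    have h := Real.rpow_add hlam' 1 (s - 1)
    rw [Real.rpow_one, show (1:ℝ) + (s - 1) = s by ring] at h
    exact h
  rw [hFinal, hEval, hone, hG1, hls]
  field_simp
  ring

end aux

theorem stmt2 (lam : ℝ) (hlam : 0 ≤ lam) (s : ℝ) (hs0 : 0 < s) (hs1 : s < 1) :
    IntegrableOn (fun t : ℝ => (Real.exp (-t * lam) - 1) * t ^ (-1 - s)) (Set.Ioi 0) ∧
    lam ^ s = (1 / Real.Gamma (-s)) *
      ∫ t in Set.Ioi (0 : ℝ), (Real.exp (-t * lam) - 1) * t ^ (-1 - s) := by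
  have hF := stmt2_integrable hlam hs0 hs1
  refine ⟨hF, ?_⟩
  rcases eq_or_lt_of_le hlam with h0 | hlam'
  · simp [← h0, Real.zero_rpow hs0.ne']
  have hv := stmt2_value hlam' hs0 hs1
  have hGamNe : Real.Gamma (-s) ≠ 0 := by
    apply Real.Gamma_ne_zero
    intro m h
    have hsm : s = (m : ℝ) := neg_inj.mp h
    rcases Nat.eq_zero_or_pos m with rfl | hm
    · rw [Nat.cast_zero] at hsm
      linarith
    · have h1 : (1:ℝ) ≤ (m : ℝ) := by exact_mod_cast hm
      linarith
  rw [hv]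
  field_simp
end

section
/- Let 0 < s < 1. There exists a constant c > 0, depending only on s, such that |B_{-s-1/2}(z)| ≤ c z^{3/2-s} for all 0 < z ≤ 1, and |B_{-s-1/2}(z)| ≤ c e^{z} z^{-1/2} for all z ≥ 1. -/
open Real


lemma gamma_ge_one {x : ℝ} (hx : 2 ≤ x) : 1 ≤ Real.Gamma x := by
  rcases eq_or_lt_of_le hx with h | h
  · rw [← h, Real.Gamma_two]
  · have h1 : (1:ℝ) ∈ Set.Ioi (0:ℝ) := by norm_num
    have hx0 : x ∈ Set.Ioi (0:ℝ) := by simp; linarith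
    have ha : (0:ℝ) ≤ (x-2)/(x-1) := div_nonneg (by linarith) (by linarith)
    have hb : (0:ℝ) < 1/(x-1) := by rw [one_div]; exact inv_pos.mpr (by linarith)
    have hab : (x-2)/(x-1) + 1/(x-1) = 1 := by
      rw [← add_div]; rw [div_eq_one_iff_eq (by linarith : x - 1 ≠ 0)]; ring
    have key := Real.convexOn_Gamma.2 h1 hx0 ha hb.le hab
    have harg : ((x-2)/(x-1)) • (1:ℝ) + (1/(x-1)) • x = 2 := by
      rw [smul_eq_mul, smul_eq_mul, mul_one, div_mul_eq_mul_div, one_mul,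
        ← add_div, div_eq_iff (by linarith : x - 1 ≠ 0)]
      ring
    rw [harg, Real.Gamma_two, Real.Gamma_one] at key
    simp only [smul_eq_mul, mul_one] at key
    -- 1 ≤ (x-2)/(x-1) + 1/(x-1) * Γ x
    by_contra hcon
    push_neg at hcon
    have : 1/(x-1) * Real.Gamma x < 1/(x-1) * 1 := by
      exact mul_lt_mul_of_pos_left hcon hb
    nlinarith [hab]

lemma gamma_inv_le {x : ℝ} (hx : 0 < x) : 1 / Real.Gamma x ≤ x * (x + 1) := by
  have h1 : Real.Gamma (x + 1 + 1) = (x+1) * (x * Real.Gamma x) := by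
    rw [Real.Gamma_add_one (by positivity), Real.Gamma_add_one (ne_of_gt hx)]
  have h2 : 1 ≤ Real.Gamma (x + 1 + 1) := gamma_ge_one (by linarith)
  have hg : 0 < Real.Gamma x := Real.Gamma_pos_of_pos hx
  rw [div_le_iff₀ hg]
  nlinarith

lemma gamma_add_le {x t : ℝ} (hx : 0 < x) (ht0 : 0 ≤ t) (ht1 : t ≤ 1) :
    Real.Gamma (x + t) ≤ Real.Gamma x * x ^ t := by
  have hx1 : x + 1 ∈ Set.Ioi (0:ℝ) := by simp; linarith
  have hxm : x ∈ Set.Ioi (0:ℝ) := hx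
  have key := Real.convexOn_log_Gamma.2 hxm hx1 (by linarith : (0:ℝ) ≤ 1 - t) ht0 (by ring)
  have harg : (1-t) • x + t • (x+1) = x + t := by simp only [smul_eq_mul]; ring
  rw [harg] at key
  simp only [Function.comp_apply, smul_eq_mul] at key
  have hlg1 : Real.log (Real.Gamma (x+1)) = Real.log x + Real.log (Real.Gamma x) := by
    rw [Real.Gamma_add_one (ne_of_gt hx), Real.log_mul (ne_of_gt hx)
      (ne_of_gt (Real.Gamma_pos_of_pos hx))]
  rw [hlg1] at key
  have hpos : 0 < Real.Gamma (x + t) := Real.Gamma_pos_of_pos (by linarith)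
  have key2 : Real.log (Real.Gamma (x+t)) ≤ Real.log (Real.Gamma x) + log x * t := by
    nlinarith [key]
  have := Real.exp_le_exp.mpr key2
  rw [Real.exp_log hpos, Real.exp_add, Real.exp_log (Real.Gamma_pos_of_pos hx)] at this
  rwa [Real.rpow_def_of_pos hx]

lemma gamma_dup (m : ℕ) :
    Real.Gamma ((m:ℝ) + 2) * Real.Gamma ((m:ℝ) + 3/2)
      = (Nat.factorial (2*m+2) : ℝ) * Real.sqrt π / 2 ^ (2*m+2) := by
  have h := Real.Gamma_mul_Gamma_add_half ((m:ℝ) + 3/2)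
  have h1 : (m:ℝ) + 3/2 + 1/2 = (m:ℝ) + 2 := by ring
  have h2 : 2 * ((m:ℝ) + 3/2) = ((2*m+2 : ℕ) : ℝ) + 1 := by push_cast; ring
  rw [h1, h2, Real.Gamma_nat_eq_factorial] at h
  have h3 : ((2:ℝ)) ^ (1 - (((2*m+2 : ℕ):ℝ) + 1)) = 1 / 2 ^ (2*m+2) := by
    rw [show (1 - (((2*m+2 : ℕ):ℝ)+1)) = -((2*m+2 : ℕ) : ℝ) by push_cast; ring,
      Real.rpow_neg (by norm_num), Real.rpow_natCast]
    simp
  rw [h3] at h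
  rw [mul_comm (Real.Gamma ((m:ℝ)+2)), h]; ring


lemma part1_term (s z : ℝ) (hs0 : 0 < s) (hs1 : s < 1) (hz0 : 0 < z) (hz1 : z ≤ 1) (m : ℕ) :
    (z / 2) ^ (2 * ((m : ℝ) + 1) + (-s - 1/2)) /
      (Real.Gamma ((m : ℝ) + 2) * Real.Gamma ((m : ℝ) + 1 + (-s - 1/2) + 1))
    ≤ z ^ (3/2 - s) * ((1/4 : ℝ) ^ m * ((m : ℝ) + 3) ^ 2) := by
  have hz2 : (0:ℝ) < z / 2 := by linarith
  obtain ⟨x, hxdef⟩ : ∃ x : ℝ, x = (m : ℝ) + 1 + (-s - 1/2) + 1 := ⟨_, rfl⟩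
  rw [← hxdef]
  have hx : 0 < x := by
    have : (0:ℝ) ≤ (m:ℝ) := Nat.cast_nonneg m
    rw [hxdef]; linarith
  have hG1 : (1:ℝ) ≤ Real.Gamma ((m:ℝ) + 2) := by
    refine gamma_ge_one ?_
    have : (0:ℝ) ≤ (m:ℝ) := Nat.cast_nonneg m
    linarith
  have hG2 : 0 < Real.Gamma x := Real.Gamma_pos_of_pos hx
  have hG1pos : 0 < Real.Gamma ((m:ℝ) + 2) := lt_of_lt_of_le one_pos hG1
  -- split the power
  have hN : (z / 2) ^ (2 * ((m : ℝ) + 1) + (-s - 1/2))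
      = (z/2) ^ (2*m) * (z/2) ^ (3/2 - s : ℝ) := by
    rw [show 2 * ((m : ℝ) + 1) + (-s - 1/2) = ((2*m : ℕ) : ℝ) + (3/2 - s) by push_cast; ring,
      Real.rpow_add hz2, Real.rpow_natCast]
  have hNb : (z/2) ^ (2*m) * (z/2) ^ (3/2 - s : ℝ)
      ≤ (1/4 : ℝ) ^ m * z ^ (3/2 - s : ℝ) := by
    have h1 : (z/2) ^ (2*m) ≤ (1/4 : ℝ) ^ m := by
      rw [pow_mul]
      refine pow_le_pow_left₀ (by positivity) ?_ m
      nlinarith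
    have h2 : (z/2) ^ (3/2 - s : ℝ) ≤ z ^ (3/2 - s : ℝ) :=
      Real.rpow_le_rpow (by linarith) (by linarith) (by linarith)
    exact mul_le_mul h1 h2 (by positivity) (by positivity)
  -- bound the denominator
  have hD : 1 / (Real.Gamma ((m:ℝ) + 2) * Real.Gamma x) ≤ ((m:ℝ) + 3) ^ 2 := by
    have h1 : 1 / (Real.Gamma ((m:ℝ) + 2) * Real.Gamma x) ≤ 1 / Real.Gamma x := by
      apply div_le_div_of_nonneg_left one_pos.le hG2
      nlinarith
    refine h1.trans ((gamma_inv_le hx).trans ?_)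
    have hm : (0:ℝ) ≤ (m:ℝ) := Nat.cast_nonneg m
    have hxle : x ≤ (m:ℝ) + 3/2 := by rw [hxdef]; linarith
    have : x * (x+1) ≤ ((m:ℝ) + 3/2) * ((m:ℝ) + 5/2) :=
      mul_le_mul hxle (by linarith) (by linarith) (by linarith)
    nlinarith
  have hNpos : 0 ≤ (z / 2) ^ (2 * ((m : ℝ) + 1) + (-s - 1/2)) := by positivity
  calc (z / 2) ^ (2 * ((m : ℝ) + 1) + (-s - 1/2)) / (Real.Gamma ((m:ℝ)+2) * Real.Gamma x)
      = (z / 2) ^ (2 * ((m : ℝ) + 1) + (-s - 1/2)) *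
        (1 / (Real.Gamma ((m:ℝ)+2) * Real.Gamma x)) := by ring
    _ ≤ (z / 2) ^ (2 * ((m : ℝ) + 1) + (-s - 1/2)) * ((m:ℝ) + 3)^2 :=
        mul_le_mul_of_nonneg_left hD hNpos
    _ ≤ ((1/4 : ℝ) ^ m * z ^ (3/2 - s : ℝ)) * ((m:ℝ) + 3)^2 := by
        refine mul_le_mul_of_nonneg_right ?_ (by positivity)
        rw [hN]; exact hNb
    _ = z ^ (3/2 - s) * ((1/4 : ℝ) ^ m * ((m : ℝ) + 3) ^ 2) := by ring


set_option maxHeartbeats 1000000 in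
lemma part2_term (s z : ℝ) (hs0 : 0 < s) (hs1 : s < 1) (hz : 1 ≤ z) (m : ℕ) :
    (z / 2) ^ (2 * ((m : ℝ) + 1) + (-s - 1/2)) /
      (Real.Gamma ((m : ℝ) + 2) * Real.Gamma ((m : ℝ) + 1 + (-s - 1/2) + 1))
    ≤ z ^ (-(1/2) : ℝ) *
        (z ^ (2*(m+1)) / (Nat.factorial (2*(m+1)) : ℝ)
          + 2 * (z ^ (2*m+1) / (Nat.factorial (2*m+1) : ℝ))) := by
  have hz0 : (0:ℝ) < z := lt_of_lt_of_le one_pos hz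
  have hz2 : (0:ℝ) < z / 2 := by linarith
  have hm0 : (0:ℝ) ≤ (m:ℝ) := Nat.cast_nonneg m
  obtain ⟨x, hxdef⟩ : ∃ x : ℝ, x = (m : ℝ) + 1 + (-s - 1/2) + 1 := ⟨_, rfl⟩
  rw [← hxdef]
  have hx : 0 < x := by rw [hxdef]; linarith
  have hG1 : 0 < Real.Gamma ((m:ℝ) + 2) := Real.Gamma_pos_of_pos (by linarith)
  have hGx : 0 < Real.Gamma x := Real.Gamma_pos_of_pos hx
  have hG32 : 0 < Real.Gamma ((m:ℝ) + 3/2) := Real.Gamma_pos_of_pos (by linarith)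
  -- Step 1 : Γ(m+3/2) ≤ Γ x * (m+3/2)^s
  have hstep1 : Real.Gamma ((m:ℝ) + 3/2) ≤ Real.Gamma x * ((m:ℝ) + 3/2) ^ (s:ℝ) := by
    have h1 : Real.Gamma (x + s) ≤ Real.Gamma x * x ^ (s:ℝ) := gamma_add_le hx hs0.le hs1.le
    have h2 : x + s = (m:ℝ) + 3/2 := by rw [hxdef]; ring
    have h3 : x ^ (s:ℝ) ≤ ((m:ℝ) + 3/2) ^ (s:ℝ) :=
      Real.rpow_le_rpow hx.le (by rw [hxdef]; linarith) hs0.le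
    rw [h2] at h1
    exact h1.trans (mul_le_mul_of_nonneg_left h3 hGx.le)
  -- the numerator split
  have hN : (z / 2) ^ (2 * ((m : ℝ) + 1) + (-s - 1/2))
      = (z/2) ^ (2*m+1) * ((z/2) ^ ((1:ℝ)/2) * (z/2) ^ (-s : ℝ)) := by
    rw [show 2 * ((m : ℝ) + 1) + (-s - 1/2) = ((2*m+1 : ℕ) : ℝ) + ((1:ℝ)/2 + (-s))
        by push_cast; ring,
      Real.rpow_add hz2, Real.rpow_add hz2, Real.rpow_natCast]
  -- step: term ≤ N * (m+3/2)^s / (Γ(m+2)Γ(m+3/2))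
  have hNnn : 0 ≤ (z / 2) ^ (2 * ((m : ℝ) + 1) + (-s - 1/2)) := by positivity
  have hmul : (0:ℝ) < ((m:ℝ) + 3/2) ^ (s:ℝ) := Real.rpow_pos_of_pos (by linarith) s
  have step2 : (z / 2) ^ (2 * ((m : ℝ) + 1) + (-s - 1/2)) /
        (Real.Gamma ((m:ℝ)+2) * Real.Gamma x)
      ≤ (z / 2) ^ (2 * ((m : ℝ) + 1) + (-s - 1/2)) * ((m:ℝ) + 3/2) ^ (s:ℝ) /
        (Real.Gamma ((m:ℝ)+2) * Real.Gamma ((m:ℝ) + 3/2)) := by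
    rw [div_le_div_iff₀ (by positivity) (by positivity)]
    have := mul_le_mul_of_nonneg_left hstep1 (mul_nonneg hNnn hG1.le)
    calc (z / 2) ^ (2 * ((m : ℝ) + 1) + (-s - 1/2)) *
          (Real.Gamma ((m:ℝ)+2) * Real.Gamma ((m:ℝ)+3/2))
        = (z / 2) ^ (2 * ((m : ℝ) + 1) + (-s - 1/2)) * Real.Gamma ((m:ℝ)+2) *
          Real.Gamma ((m:ℝ)+3/2) := by ring
      _ ≤ (z / 2) ^ (2 * ((m : ℝ) + 1) + (-s - 1/2)) * Real.Gamma ((m:ℝ)+2) *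
          (Real.Gamma x * ((m:ℝ) + 3/2) ^ (s:ℝ)) := this
      _ = (z / 2) ^ (2 * ((m : ℝ) + 1) + (-s - 1/2)) * ((m:ℝ) + 3/2) ^ (s:ℝ) *
          (Real.Gamma ((m:ℝ)+2) * Real.Gamma x) := by ring
  refine step2.trans ?_
  rw [gamma_dup m, hN]
  -- abbreviations
  obtain ⟨F, hF⟩ : ∃ F : ℝ, F = (Nat.factorial (2*m+2) : ℝ) := ⟨_, rfl⟩
  have hFpos : 0 < F := by rw [hF]; positivity
  have hfac : (Nat.factorial (2*m+2) : ℝ) = ((2:ℝ)*m+2) * (Nat.factorial (2*m+1) : ℝ) := by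
    rw [show 2*m+2 = (2*m+1) + 1 by ring, Nat.factorial_succ]; push_cast; ring
  -- the s-power factor
  have hts : (z/2) ^ (-s : ℝ) * ((m:ℝ) + 3/2) ^ (s:ℝ) ≤ 1 + (2*(m:ℝ)+3)/z := by
    have h1 : (z/2) ^ (-s : ℝ) = (2/z) ^ (s:ℝ) := by
      rw [Real.rpow_neg hz2.le, ← Real.inv_rpow hz2.le]
      norm_num
    have h2 : (2/z) ^ (s:ℝ) * ((m:ℝ) + 3/2) ^ (s:ℝ) = ((2*(m:ℝ)+3)/z) ^ (s:ℝ) := by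
      rw [← Real.mul_rpow (by positivity) (by linarith)]
      congr 1
      field_simp
    rw [h1, h2]
    have ht0 : (0:ℝ) < (2*(m:ℝ)+3)/z := by positivity
    rcases le_or_gt ((2*(m:ℝ)+3)/z) 1 with h | h
    · have := Real.rpow_le_one ht0.le h hs0.le
      linarith [ht0.le]
    · have := Real.rpow_le_rpow_of_exponent_le h.le hs1.le
      rw [Real.rpow_one] at this
      linarith
  -- abbreviations for square roots
  obtain ⟨a, hadef⟩ : ∃ a : ℝ, a = z ^ ((1:ℝ)/2) := ⟨_, rfl⟩
  obtain ⟨b, hbdef⟩ : ∃ b : ℝ, b = (2:ℝ) ^ ((1:ℝ)/2) := ⟨_, rfl⟩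
  have hapos : 0 < a := by rw [hadef]; positivity
  have hbpos : 0 < b := by rw [hbdef]; positivity
  have haa : a * a = z := by
    rw [hadef, ← Real.rpow_add hz0]; norm_num
  have hbb : b * b = 2 := by
    rw [hbdef, ← Real.rpow_add (by norm_num : (0:ℝ) < 2)]; norm_num
  have hzinv : z ^ (-(1/2) : ℝ) = a⁻¹ := by
    rw [show (-(1/2) : ℝ) = -((1:ℝ)/2) by norm_num, Real.rpow_neg hz0.le, hadef]
  have hzb : (z/2) ^ ((1:ℝ)/2) = a / b := by
    rw [Real.div_rpow hz0.le (by norm_num), hadef, hbdef]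
  have hsqpi : 0 < Real.sqrt π := Real.sqrt_pos.mpr Real.pi_pos
  have hbpi : 2 ≤ b * Real.sqrt π := by
    have h2pi : (2:ℝ) ≤ π := by linarith [Real.pi_gt_three]
    have : b ≤ Real.sqrt π := by
      rw [hbdef, ← Real.sqrt_eq_rpow]
      exact Real.sqrt_le_sqrt h2pi
    nlinarith
  have hDpos : 0 < F * Real.sqrt π / 2 ^ (2*m+2) := by positivity
  rw [← hF]
  -- Step B : the pure part
  have hQ : (z/2) ^ (2*m+1) * (z/2) ^ ((1:ℝ)/2) / (F * Real.sqrt π / 2 ^ (2*m+2))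
      ≤ a⁻¹ * z ^ (2*m+2) / F := by
    rw [hzb, div_pow]
    have hre : z ^ (2*m+1) / 2 ^ (2*m+1) * (a / b) / (F * Real.sqrt π / 2 ^ (2*m+2))
        = z ^ (2*m+1) * a * (2 / (b * Real.sqrt π)) / F := by
      rw [show (2:ℝ) ^ (2*m+2) = 2 * 2 ^ (2*m+1) by rw [pow_succ]; ring]
      field_simp
    rw [hre]
    have h1 : z ^ (2*m+1) * a * (2 / (b * Real.sqrt π)) ≤ z ^ (2*m+1) * a * 1 := by
      refine mul_le_mul_of_nonneg_left ?_ (by positivity)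
      rw [div_le_one (by positivity)]
      exact hbpi
    have h2 : z ^ (2*m+1) * a * 1 = a⁻¹ * z ^ (2*m+2) := by
      rw [pow_succ, ← haa]
      field_simp
      ring
    rw [← h2]
    exact div_le_div_of_nonneg_right h1 hFpos.le
  -- put the two pieces together
  have hQnn : 0 ≤ (z/2) ^ (2*m+1) * (z/2) ^ ((1:ℝ)/2) / (F * Real.sqrt π / 2 ^ (2*m+2)) := by
    positivity
  have hType : (z/2) ^ (2*m+1) * ((z/2) ^ ((1:ℝ)/2) * (z/2) ^ (-s : ℝ)) * ((m:ℝ) + 3/2) ^ (s:ℝ)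
        / (F * Real.sqrt π / 2 ^ (2*m+2))
      = ((z/2) ^ (2*m+1) * (z/2) ^ ((1:ℝ)/2) / (F * Real.sqrt π / 2 ^ (2*m+2))) *
        ((z/2) ^ (-s : ℝ) * ((m:ℝ) + 3/2) ^ (s:ℝ)) := by
    ring
  rw [hType]
  have honn : (0:ℝ) ≤ 1 + (2*(m:ℝ)+3)/z := by positivity
  calc ((z/2) ^ (2*m+1) * (z/2) ^ ((1:ℝ)/2) / (F * Real.sqrt π / 2 ^ (2*m+2))) *
        ((z/2) ^ (-s : ℝ) * ((m:ℝ) + 3/2) ^ (s:ℝ))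
      ≤ (a⁻¹ * z ^ (2*m+2) / F) * (1 + (2*(m:ℝ)+3)/z) := by
        refine mul_le_mul hQ hts ?_ ?_
        · positivity
        · positivity
    _ = a⁻¹ * (z ^ (2*m+2) / F + z ^ (2*m+1) * ((2*(m:ℝ)+3) / F)) := by
        rw [show z ^ (2*m+2) = z ^ (2*m+1) * z by rw [pow_succ]]
        field_simp
    _ ≤ a⁻¹ * (z ^ (2*m+2) / F + z ^ (2*m+1) * (2 / (Nat.factorial (2*m+1) : ℝ))) := by
        refine mul_le_mul_of_nonneg_left ?_ (by positivity)
        refine add_le_add_right ?_ _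
        refine mul_le_mul_of_nonneg_left ?_ (by positivity)
        rw [hF, hfac, div_le_div_iff₀ (by positivity) (by positivity)]
        have hfp : (0:ℝ) < (Nat.factorial (2*m+1) : ℝ) := by positivity
        nlinarith
    _ = z ^ (-(1/2) : ℝ) *
        (z ^ (2*(m+1)) / (Nat.factorial (2*(m+1)) : ℝ)
          + 2 * (z ^ (2*m+1) / (Nat.factorial (2*m+1) : ℝ))) := by
        rw [hzinv, show 2*(m+1) = 2*m+2 by ring, hF]
        ring

/-- The modified Bessel function of the first kind `I_ρ(z)` minus the first term of its
Taylor expansion: `B_ρ(z) = ∑_{m=1}^∞ (z/2)^(2m+ρ)/(Γ(m+1)Γ(m+ρ+1))`. -/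
noncomputable def besselB (ρ z : ℝ) : ℝ :=
  ∑' m : ℕ, (z / 2) ^ (2 * ((m : ℝ) + 1) + ρ) /
    (Real.Gamma ((m : ℝ) + 2) * Real.Gamma ((m : ℝ) + 1 + ρ + 1))

theorem stmt3 (s : ℝ) (hs0 : 0 < s) (hs1 : s < 1) :
    ∃ c : ℝ, 0 < c ∧
      (∀ z : ℝ, 0 < z → z ≤ 1 → |besselB (-s - 1/2) z| ≤ c * z ^ (3/2 - s)) ∧
      (∀ z : ℝ, 1 ≤ z → |besselB (-s - 1/2) z| ≤ c * Real.exp z * z ^ (-(1/2) : ℝ)) := by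
  obtain ⟨T, hT⟩ : ∃ T : ℝ, T = ∑' m : ℕ, (1/4:ℝ)^m * ((m:ℝ)+3)^2 := ⟨_, rfl⟩
  have hu : Summable (fun m : ℕ => (1/4:ℝ)^m * ((m:ℝ)+3)^2) := by
    have hr : ‖(1/4 : ℝ)‖ < 1 := by
      rw [Real.norm_eq_abs, abs_of_nonneg (by norm_num : (0:ℝ) ≤ 1/4)]; norm_num
    have h2 := summable_pow_mul_geometric_of_norm_lt_one (R := ℝ) 2 hr
    have h1 := summable_pow_mul_geometric_of_norm_lt_one (R := ℝ) 1 hr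
    have h0 := summable_pow_mul_geometric_of_norm_lt_one (R := ℝ) 0 hr
    refine (h2.add ((h1.mul_left 6).add (h0.mul_left 9))).congr fun m => ?_
    push_cast
    ring
  have hTnn : 0 ≤ T := by
    rw [hT]; exact tsum_nonneg fun m => by positivity
  have hGpos : ∀ (z : ℝ), 0 < z → ∀ m : ℕ,
      (0:ℝ) < Real.Gamma ((m : ℝ) + 2) * Real.Gamma ((m : ℝ) + 1 + (-s - 1/2) + 1) := by
    intro z hz m
    have hm : (0:ℝ) ≤ (m:ℝ) := Nat.cast_nonneg m
    exact mul_pos (Real.Gamma_pos_of_pos (by linarith)) (Real.Gamma_pos_of_pos (by linarith))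
  refine ⟨T + 3, by linarith, ?_, ?_⟩
  · -- small z
    intro z hz0 hz1
    rw [besselB]
    have hnn : ∀ m : ℕ, (0:ℝ) ≤ (z / 2) ^ (2 * ((m : ℝ) + 1) + (-s - 1/2)) /
        (Real.Gamma ((m : ℝ) + 2) * Real.Gamma ((m : ℝ) + 1 + (-s - 1/2) + 1)) := by
      intro m
      exact div_nonneg (Real.rpow_nonneg (by linarith) _) (hGpos z hz0 m).le
    rw [abs_of_nonneg (tsum_nonneg hnn)]
    have hle := part1_term s z hs0 hs1 hz0 hz1
    have hmaj : Summable (fun m : ℕ => z ^ (3/2 - s) * ((1/4:ℝ)^m * ((m:ℝ)+3)^2)) :=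
      hu.mul_left _
    have hsumf : Summable (fun m : ℕ => (z / 2) ^ (2 * ((m : ℝ) + 1) + (-s - 1/2)) /
        (Real.Gamma ((m : ℝ) + 2) * Real.Gamma ((m : ℝ) + 1 + (-s - 1/2) + 1))) :=
      Summable.of_nonneg_of_le hnn hle hmaj
    have hzts : (0:ℝ) ≤ z ^ (3/2 - s : ℝ) := Real.rpow_nonneg hz0.le _
    calc (∑' m : ℕ, (z / 2) ^ (2 * ((m : ℝ) + 1) + (-s - 1/2)) /
          (Real.Gamma ((m : ℝ) + 2) * Real.Gamma ((m : ℝ) + 1 + (-s - 1/2) + 1)))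
        ≤ ∑' m : ℕ, z ^ (3/2 - s) * ((1/4:ℝ)^m * ((m:ℝ)+3)^2) :=
          Summable.tsum_le_tsum hle hsumf hmaj
      _ = z ^ (3/2 - s) * T := by rw [tsum_mul_left, hT]
      _ ≤ (T + 3) * z ^ (3/2 - s) := by nlinarith
  · -- large z
    intro z hz
    have hz0 : (0:ℝ) < z := lt_of_lt_of_le one_pos hz
    rw [besselB]
    have hnn : ∀ m : ℕ, (0:ℝ) ≤ (z / 2) ^ (2 * ((m : ℝ) + 1) + (-s - 1/2)) /
        (Real.Gamma ((m : ℝ) + 2) * Real.Gamma ((m : ℝ) + 1 + (-s - 1/2) + 1)) := by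
      intro m
      exact div_nonneg (Real.rpow_nonneg (by linarith) _) (hGpos z hz0 m).le
    rw [abs_of_nonneg (tsum_nonneg hnn)]
    have hle := part2_term s z hs0 hs1 hz
    -- the majorant and its sum
    have hcosh : Summable (fun n : ℕ => z ^ (2*n) / (Nat.factorial (2*n) : ℝ)) :=
      (Real.hasSum_cosh z).summable
    have hsinh : Summable (fun n : ℕ => z ^ (2*n+1) / (Nat.factorial (2*n+1) : ℝ)) :=
      (Real.hasSum_sinh z).summable
    have hinj : Function.Injective (fun m : ℕ => m + 1) := add_left_injective 1
    have hc1 : Summable (fun m : ℕ => z ^ (2*(m+1)) / (Nat.factorial (2*(m+1)) : ℝ)) :=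
      hcosh.comp_injective hinj
    have hc2 : Summable (fun m : ℕ => 2 * (z ^ (2*m+1) / (Nat.factorial (2*m+1) : ℝ))) :=
      hsinh.mul_left 2
    have hmaj : Summable (fun m : ℕ => z ^ (-(1/2) : ℝ) *
        (z ^ (2*(m+1)) / (Nat.factorial (2*(m+1)) : ℝ)
          + 2 * (z ^ (2*m+1) / (Nat.factorial (2*m+1) : ℝ)))) :=
      (hc1.add hc2).mul_left _
    have hsumf : Summable (fun m : ℕ => (z / 2) ^ (2 * ((m : ℝ) + 1) + (-s - 1/2)) /
        (Real.Gamma ((m : ℝ) + 2) * Real.Gamma ((m : ℝ) + 1 + (-s - 1/2) + 1))) :=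
      Summable.of_nonneg_of_le hnn hle hmaj
    have hcle : (∑' m : ℕ, z ^ (2*(m+1)) / (Nat.factorial (2*(m+1)) : ℝ)) ≤ Real.cosh z := by
      rw [← (Real.hasSum_cosh z).tsum_eq]
      refine Summable.tsum_le_tsum_of_inj (fun m : ℕ => m + 1) hinj
        (fun c _ => by positivity) (fun m => le_rfl) hc1 hcosh
    have hsle : (∑' m : ℕ, 2 * (z ^ (2*m+1) / (Nat.factorial (2*m+1) : ℝ)))
        = 2 * Real.sinh z := by
      rw [tsum_mul_left, (Real.hasSum_sinh z).tsum_eq]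
    have hrp : (0:ℝ) < z ^ (-(1/2) : ℝ) := Real.rpow_pos_of_pos hz0 _
    have hbound : Real.cosh z + 2 * Real.sinh z ≤ 3 * Real.exp z := by
      rw [Real.cosh_eq, Real.sinh_eq]
      have h1 : 0 < Real.exp (-z) := Real.exp_pos _
      have h2 : Real.exp (-z) ≤ Real.exp z := Real.exp_le_exp.mpr (by linarith)
      linarith
    calc (∑' m : ℕ, (z / 2) ^ (2 * ((m : ℝ) + 1) + (-s - 1/2)) /
          (Real.Gamma ((m : ℝ) + 2) * Real.Gamma ((m : ℝ) + 1 + (-s - 1/2) + 1)))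
        ≤ ∑' m : ℕ, z ^ (-(1/2) : ℝ) *
            (z ^ (2*(m+1)) / (Nat.factorial (2*(m+1)) : ℝ)
              + 2 * (z ^ (2*m+1) / (Nat.factorial (2*m+1) : ℝ))) :=
          Summable.tsum_le_tsum hle hsumf hmaj
      _ = z ^ (-(1/2) : ℝ) *
            ((∑' m : ℕ, z ^ (2*(m+1)) / (Nat.factorial (2*(m+1)) : ℝ))
              + ∑' m : ℕ, 2 * (z ^ (2*m+1) / (Nat.factorial (2*m+1) : ℝ))) := by
          rw [tsum_mul_left, Summable.tsum_add hc1 hc2]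
      _ ≤ z ^ (-(1/2) : ℝ) * (3 * Real.exp z) := by
          refine mul_le_mul_of_nonneg_left ?_ hrp.le
          rw [hsle]
          linarith [hcle, hbound]
      _ ≤ (T + 3) * Real.exp z * z ^ (-(1/2) : ℝ) := by
          have h1 := Real.exp_pos z
          nlinarith [mul_pos h1 hrp, mul_nonneg hTnn (mul_pos h1 hrp).le]
end

section
/- Fix σ ∈ ℂ with σ ≠ 1. Then ζ(σ, x) − x^{-σ} tends to the Riemann zeta value ζ(σ) as x → 0^+ (x real, 0 < x < 1). -/
open HurwitzZeta Complex Filter Topology Set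

noncomputable def em1 (w : ℝ) (s : ℂ) (n : ℕ) : ℂ :=
  (s - 1) * ((((n : ℝ) + w : ℝ) : ℂ) ^ (-s) + (((n : ℝ) + 1 + w : ℝ) : ℂ) ^ (-s)) / 2
    + ((((n : ℝ) + 1 + w : ℝ) : ℂ) ^ (1 - s) - (((n : ℝ) + w : ℝ) : ℂ) ^ (1 - s))

lemma em1_def (w : ℝ) (s : ℂ) (n : ℕ) : em1 w s n =
  (s - 1) * ((((n : ℝ) + w : ℝ) : ℂ) ^ (-s) + (((n : ℝ) + 1 + w : ℝ) : ℂ) ^ (-s)) / 2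
    + ((((n : ℝ) + 1 + w : ℝ) : ℂ) ^ (1 - s) - (((n : ℝ) + w : ℝ) : ℂ) ^ (1 - s)) := rfl



lemma deriv_aux (c : ℝ) (z : ℂ) {u : ℝ} (hu : 0 < c + u) :
    HasDerivAt (fun u : ℝ => (((c + u : ℝ)) : ℂ) ^ z) (z * (((c + u : ℝ)) : ℂ) ^ (z - 1)) u := by
  have hmem : ((c : ℂ) + (u : ℂ)) ∈ Complex.slitPlane := by
    refine Or.inl ?_
    simpa using hu
  have h : HasDerivAt (fun w : ℂ => ((c : ℂ) + w) ^ z) (z * ((c : ℂ) + (u : ℂ)) ^ (z - 1)) (u : ℂ) := by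
    simpa using ((hasDerivAt_id ((u : ℝ) : ℂ)).const_add (c : ℂ)).cpow_const hmem
  have := h.comp_ofReal
  simp only [← Complex.ofReal_add] at this
  exact this

lemma em1_bound (w : ℝ) (hw : 1 ≤ w) (s : ℂ) (hs : -2 < s.re) (n : ℕ) :
    ‖em1 w s n‖ ≤ ‖s - 1‖ * (‖s‖ * ‖s + 1‖) * ((n + 1 : ℝ)) ^ (-s.re - 2) := by
  have hpos : (0:ℝ) < (n+1:ℝ) := by positivity
  rcases eq_or_ne s 1 with rfl | hs1
  · have : em1 w 1 n = 0 := by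
      simp [em1]
    rw [this, norm_zero]
    positivity
  set c : ℝ := (n : ℝ) + w with hc_def
  have hc1 : (n + 1 : ℝ) ≤ c := by simp [hc_def]; linarith
  have hcu : ∀ u : ℝ, u ∈ Set.uIcc (0:ℝ) 1 → 0 < c + u := by
    intro u hu
    rw [Set.uIcc_of_le zero_le_one] at hu
    nlinarith [hu.1]
  set g : ℝ → ℂ := fun u => (((c + u : ℝ)) : ℂ) ^ (-s) with hg_def
  set g1 : ℝ → ℂ := fun u => (-s) * (((c + u : ℝ)) : ℂ) ^ (-s - 1) with hg1_def
  set g2 : ℝ → ℂ := fun u => (s * (s + 1)) * (((c + u : ℝ)) : ℂ) ^ (-s - 2) with hg2_def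
  have hg : ∀ u ∈ Set.uIcc (0:ℝ) 1, HasDerivAt g (g1 u) u := fun u hu => by
    simpa [hg_def, hg1_def] using deriv_aux c (-s) (hcu u hu)
  have hg1 : ∀ u ∈ Set.uIcc (0:ℝ) 1, HasDerivAt g1 (g2 u) u := fun u hu => by
    have h := (deriv_aux c (-s - 1) (hcu u hu)).const_mul (-s)
    have hexp : -s - 1 - 1 = -s - 2 := by ring
    rw [hexp] at h
    have hval : (-s) * ((-s - 1) * (((c + u : ℝ)) : ℂ) ^ (-s - 2)) = g2 u := by
      rw [hg2_def]; ring
    rw [hval] at h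
    exact h
  -- continuity
  have hgc : ContinuousOn g (Set.uIcc (0:ℝ) 1) := fun u hu => ((hg u hu).continuousAt).continuousWithinAt
  have hg1c : ContinuousOn g1 (Set.uIcc (0:ℝ) 1) := fun u hu => ((hg1 u hu).continuousAt).continuousWithinAt
  have hg2c : ContinuousOn g2 (Set.uIcc (0:ℝ) 1) := fun u hu =>
    (continuousAt_const.mul (deriv_aux c (-s - 2) (hcu u hu)).continuousAt).continuousWithinAt
  have hgi : IntervalIntegrable g MeasureTheory.volume 0 1 := hgc.intervalIntegrable
  have hg1i : IntervalIntegrable (fun u => ((u:ℂ) - 1/2) * g1 u) MeasureTheory.volume 0 1 := by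
    refine ContinuousOn.intervalIntegrable ?_
    exact (Complex.continuous_ofReal.continuousOn.sub continuousOn_const).mul hg1c
  have hg2i : IntervalIntegrable (fun u => (((u:ℂ)^2 - u)/2) * g2 u) MeasureTheory.volume 0 1 := by
    refine ContinuousOn.intervalIntegrable ?_
    exact (((Complex.continuous_ofReal.pow 2).continuousOn.sub
      Complex.continuous_ofReal.continuousOn).div_const 2).mul hg2c
  -- FTC 1 : ∫ (g + φ g1) = (g 0 + g 1)/2
  have ftc1 : ∫ u in (0:ℝ)..1, (g u + ((u:ℂ) - 1/2) * g1 u) = (g 0 + g 1) / 2 := by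
    have hD : ∀ u ∈ Set.uIcc (0:ℝ) 1,
        HasDerivAt (fun u : ℝ => ((u:ℂ) - 1/2) * g u) (g u + ((u:ℂ) - 1/2) * g1 u) u := by
      intro u hu
      have hφ : HasDerivAt (fun u : ℝ => ((u:ℂ) - 1/2)) 1 u := by
        simpa using (Complex.ofRealCLM.hasDerivAt (x := u)).sub_const (1/2 : ℂ)
      have := hφ.mul (hg u hu)
      convert this using 1
      · rfl
      · rfl
      · ring
    have := intervalIntegral.integral_eq_sub_of_hasDerivAt hD
      (hgi.add hg1i)
    rw [this]
    simp only [hg_def]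
    push_cast
    ring_nf
  -- FTC 2 : ∫ (φ g1 + ψ g2) = 0
  have ftc2 : ∫ u in (0:ℝ)..1, (((u:ℂ) - 1/2) * g1 u + (((u:ℂ)^2 - u)/2) * g2 u) = 0 := by
    have hD : ∀ u ∈ Set.uIcc (0:ℝ) 1,
        HasDerivAt (fun u : ℝ => (((u:ℂ)^2 - u)/2) * g1 u)
          (((u:ℂ) - 1/2) * g1 u + (((u:ℂ)^2 - u)/2) * g2 u) u := by
      intro u hu
      have hψ : HasDerivAt (fun u : ℝ => (((u:ℂ)^2 - u)/2)) ((u:ℂ) - 1/2) u := by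
        have h0 : HasDerivAt (fun u : ℝ => ((u:ℂ))) 1 u := Complex.ofRealCLM.hasDerivAt
        have h1 := ((h0.mul h0).sub h0).div_const 2
        have hfun : (fun u : ℝ => (((u:ℂ)^2 - u)/2)) = fun u : ℝ => (((u:ℂ) * u - u)/2) := by
          funext v; ring
        rw [hfun]
        convert h1 using 1
        · rfl
        · rfl
        · ring
      have := hψ.mul (hg1 u hu)
      convert this using 1
      · rfl
      · rfl
    have := intervalIntegral.integral_eq_sub_of_hasDerivAt hD (hg1i.add hg2i)
    rw [this]
    norm_num
  -- value of ∫ g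
  have hIg : ∫ u in (0:ℝ)..1, g u
      = ((((n : ℝ) + 1 + w : ℝ) : ℂ) ^ (1 - s) - (((n : ℝ) + w : ℝ) : ℂ) ^ (1 - s)) / (1 - s) := by
    have hD : ∀ u ∈ Set.uIcc (0:ℝ) 1,
        HasDerivAt (fun u : ℝ => (((c + u : ℝ)) : ℂ) ^ (1 - s) / (1 - s)) (g u) u := by
      intro u hu
      have := (deriv_aux c (1 - s) (hcu u hu)).div_const (1 - s)
      have hexp : (1:ℂ) - s - 1 = -s := by ring
      rw [hexp] at this
      have h1s : (1:ℂ) - s ≠ 0 := by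
        intro h
        apply hs1
        have : s = 1 := by linear_combination -h
        exact this
      have hval : (1 - s) * (((c + u : ℝ)) : ℂ) ^ (-s) / (1 - s) = g u := by
        rw [hg_def]
        field_simp
      rw [hval] at this
      exact this
    have := intervalIntegral.integral_eq_sub_of_hasDerivAt hD hgi
    have h10 : ((c + 1 : ℝ) : ℂ) = (((n:ℝ) + 1 + w : ℝ) : ℂ) := by rw [hc_def]; push_cast; ring
    have h00 : ((c + 0 : ℝ) : ℂ) = (((n:ℝ) + w : ℝ) : ℂ) := by rw [hc_def]; push_cast; ring
    rw [this, h10, h00, div_sub_div_same]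
  -- combine: em1 = -(s-1) * ∫ ψ g2
  have key : em1 w s n = -((s - 1) * ∫ u in (0:ℝ)..1, (((u:ℂ)^2 - u)/2) * g2 u) := by
    have hsplit1 : (∫ u in (0:ℝ)..1, (g u + ((u:ℂ) - 1/2) * g1 u))
        = (∫ u in (0:ℝ)..1, g u) + ∫ u in (0:ℝ)..1, ((u:ℂ) - 1/2) * g1 u :=
      intervalIntegral.integral_add hgi hg1i
    have hsplit2 : (∫ u in (0:ℝ)..1, (((u:ℂ) - 1/2) * g1 u + (((u:ℂ)^2 - u)/2) * g2 u))
        = (∫ u in (0:ℝ)..1, ((u:ℂ) - 1/2) * g1 u) + ∫ u in (0:ℝ)..1, (((u:ℂ)^2 - u)/2) * g2 u :=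
      intervalIntegral.integral_add hg1i hg2i
    rw [hsplit1] at ftc1
    rw [hsplit2] at ftc2
    have hg0 : g 0 = (((n : ℝ) + w : ℝ) : ℂ) ^ (-s) := by
      rw [hg_def, hc_def]; norm_num
    have hg1v : g 1 = (((n : ℝ) + 1 + w : ℝ) : ℂ) ^ (-s) := by
      rw [hg_def]
      congr 2
      rw [hc_def]; push_cast; ring
    have h1s : (1:ℂ) - s ≠ 0 := fun h => hs1 (by linear_combination -h)
    have hIφ : (∫ u in (0:ℝ)..1, ((u:ℂ) - 1/2) * g1 u)
        = (g 0 + g 1)/2 - ∫ u in (0:ℝ)..1, g u := by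
      linear_combination ftc1
    rw [hIφ, hIg, hg0, hg1v] at ftc2
    have hid : (1 - s) * (((((n : ℝ) + 1 + w : ℝ) : ℂ) ^ (1 - s)
        - (((n : ℝ) + w : ℝ) : ℂ) ^ (1 - s)) / (1 - s))
        = (((n : ℝ) + 1 + w : ℝ) : ℂ) ^ (1 - s) - (((n : ℝ) + w : ℝ) : ℂ) ^ (1 - s) :=
      mul_div_cancel₀ _ h1s
    rw [em1]
    linear_combination (s - 1) * ftc2 - hid
  rw [key]
  rw [norm_neg, norm_mul]
  rw [mul_assoc]
  refine mul_le_mul_of_nonneg_left ?_ (norm_nonneg _)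
  have hb : ∀ u ∈ Set.uIoc (0:ℝ) 1,
      ‖(((u:ℂ)^2 - u)/2) * g2 u‖ ≤ ‖s‖ * ‖s + 1‖ * ((n + 1 : ℝ)) ^ (-s.re - 2) := by
    intro u hu
    rw [Set.uIoc_of_le zero_le_one] at hu
    rw [norm_mul]
    have hψ : ‖(((u:ℂ)^2 - u)/2)‖ ≤ 1 := by
      have : (((u:ℂ)^2 - u)/2) = (((u^2 - u)/2 : ℝ) : ℂ) := by push_cast; ring
      rw [this, Complex.norm_real, Real.norm_eq_abs, abs_le]
      constructor <;> nlinarith [hu.1, hu.2]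
    have hcu' : (0:ℝ) < c + u := by nlinarith [hu.1]
    have hg2n : ‖g2 u‖ ≤ ‖s‖ * ‖s + 1‖ * ((n + 1 : ℝ)) ^ (-s.re - 2) := by
      rw [hg2_def]
      simp only [norm_mul]
      rw [Complex.norm_cpow_eq_rpow_re_of_pos hcu']
      have hre : (-s - 2).re = -s.re - 2 := by simp
      rw [hre]
      refine mul_le_mul_of_nonneg_left ?_ (by positivity)
      refine Real.rpow_le_rpow_of_nonpos hpos ?_ (by linarith)
      nlinarith [hu.1]
    calc ‖(((u:ℂ)^2 - u)/2)‖ * ‖g2 u‖ ≤ 1 * (‖s‖ * ‖s + 1‖ * ((n + 1 : ℝ)) ^ (-s.re - 2)) :=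
          mul_le_mul hψ hg2n (norm_nonneg _) zero_le_one
      _ = ‖s‖ * ‖s + 1‖ * ((n + 1 : ℝ)) ^ (-s.re - 2) := one_mul _
  have := intervalIntegral.norm_integral_le_of_norm_le_const hb
  simpa [mul_assoc] using this





lemma summable_rpow_shift {p : ℝ} (hp : p < -1) :
    Summable (fun n : ℕ => ((n : ℝ) + 1) ^ p) := by
  have h := Real.summable_nat_rpow.mpr hp
  have h2 := (summable_nat_add_iff 1).mpr h
  refine h2.congr fun n => ?_
  push_cast
  ring_nf

lemma summable_em1 (w : ℝ) (hw : 1 ≤ w) {s : ℂ} (hs : -1 < s.re) :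
    Summable (fun n => em1 w s n) := by
  refine Summable.of_norm_bounded ((summable_rpow_shift (p := -s.re - 2)
    (by linarith)).mul_left (‖s - 1‖ * (‖s‖ * ‖s + 1‖))) ?_
  intro n
  exact em1_bound w hw s (by linarith) n

lemma tendsto_cpow_nat_zero (w : ℝ) (hw : 1 ≤ w) {z : ℂ} (hz : z.re < 0) :
    Tendsto (fun n : ℕ => (((n : ℝ) + w : ℝ) : ℂ) ^ z) atTop (𝓝 0) := by
  rw [tendsto_zero_iff_norm_tendsto_zero]
  have heq : ∀ n : ℕ, ‖(((n : ℝ) + w : ℝ) : ℂ) ^ z‖ = ((n : ℝ) + w) ^ z.re := by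
    intro n
    rw [Complex.norm_cpow_eq_rpow_re_of_pos (by positivity)]
  simp only [heq]
  have h1 : Tendsto (fun n : ℕ => (n : ℝ) + w) atTop atTop :=
    tendsto_atTop_add_const_right atTop w tendsto_natCast_atTop_atTop
  have h2 : Tendsto (fun x : ℝ => x ^ z.re) atTop (𝓝 0) := by
    have := tendsto_rpow_neg_atTop (y := -z.re) (by linarith)
    simpa using this
  exact h2.comp h1

lemma hasSum_key (w : ℝ) (hw : 1 ≤ w) {s : ℂ} (hs : 1 < s.re) {Z : ℂ}
    (hser : HasSum (fun n : ℕ => (((n : ℝ) + w : ℝ) : ℂ) ^ (-s)) Z) :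
    (s - 1) * Z = (w : ℂ) ^ (1 - s) + (s - 1) * (w : ℂ) ^ (-s) / 2 + ∑' n, em1 w s n := by
  have hsum := (summable_em1 w hw (s := s) (by linarith)).hasSum
  set T := ∑' n, em1 w s n with hT
  set G : ℕ → ℂ := fun n =>
    (((n : ℝ) + w : ℝ) : ℂ) ^ (1 - s) + (s - 1) * (((n : ℝ) + w : ℝ) : ℂ) ^ (-s) / 2 with hG
  have htel : HasSum (fun n => G n - G (n + 1)) ((s - 1) * Z - T) := by
    refine ((hser.mul_left (s - 1)).sub hsum).congr_fun fun n => ?_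
    rw [em1_def, hG]
    have hcast : (((n + 1 : ℕ) : ℝ) + w : ℝ) = ((n : ℝ) + 1 + w : ℝ) := by push_cast; ring
    simp only [hcast]
    ring
  have h1 := htel.tendsto_sum_nat
  have h2 : Tendsto (fun N => ∑ i ∈ Finset.range N, (G i - G (i + 1))) atTop (𝓝 (G 0)) := by
    simp only [Finset.sum_range_sub' G]
    have hg0 : Tendsto (fun N : ℕ => G N) atTop (𝓝 0) := by
      rw [hG]
      have ha := tendsto_cpow_nat_zero w hw (z := 1 - s) (by simp; linarith)
      have hb := (tendsto_cpow_nat_zero w hw (z := -s) (by simp; linarith)).const_mul (s - 1)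
      simpa using ha.add (hb.div_const 2)
    simpa using tendsto_const_nhds.sub hg0
  have h3 : (s - 1) * Z - T = G 0 := tendsto_nhds_unique h1 h2
  have hg0v : G 0 = (w : ℂ) ^ (1 - s) + (s - 1) * (w : ℂ) ^ (-s) / 2 := by
    rw [hG]
    norm_num
  rw [hg0v] at h3
  linear_combination h3



lemma em1_differentiable (w : ℝ) (hw : 1 ≤ w) (n : ℕ) :
    Differentiable ℂ (fun s => em1 w s n) := by
  have hfun : (fun s => em1 w s n) = fun s =>
      (s - 1) * ((((n : ℝ) + w : ℝ) : ℂ) ^ (-s) + (((n : ℝ) + 1 + w : ℝ) : ℂ) ^ (-s)) / 2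
      + ((((n : ℝ) + 1 + w : ℝ) : ℂ) ^ (1 - s) - (((n : ℝ) + w : ℝ) : ℂ) ^ (1 - s)) := by
    funext s; exact em1_def w s n
  rw [hfun]
  have hc1 : ((((n : ℝ) + w : ℝ)) : ℂ) ≠ 0 := by
    simp only [ne_eq, ofReal_eq_zero]
    positivity
  have hc2 : ((((n : ℝ) + 1 + w : ℝ)) : ℂ) ≠ 0 := by
    simp only [ne_eq, ofReal_eq_zero]
    positivity
  have hd1 : Differentiable ℂ fun s : ℂ => ((((n : ℝ) + w : ℝ)) : ℂ) ^ (-s) :=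
    Differentiable.const_cpow differentiable_neg (Or.inl hc1)
  have hd2 : Differentiable ℂ fun s : ℂ => ((((n : ℝ) + 1 + w : ℝ)) : ℂ) ^ (-s) :=
    Differentiable.const_cpow differentiable_neg (Or.inl hc2)
  have hd3 : Differentiable ℂ fun s : ℂ => ((((n : ℝ) + 1 + w : ℝ)) : ℂ) ^ (1 - s) :=
    Differentiable.const_cpow ((differentiable_const 1).sub differentiable_id) (Or.inl hc2)
  have hd4 : Differentiable ℂ fun s : ℂ => ((((n : ℝ) + w : ℝ)) : ℂ) ^ (1 - s) :=
    Differentiable.const_cpow ((differentiable_const 1).sub differentiable_id) (Or.inl hc1)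
  exact (((differentiable_id.sub_const 1).mul (hd1.add hd2)).div_const 2).add (hd3.sub hd4)

lemma phi_diff (w : ℝ) (hw : 1 ≤ w) {s₀ : ℂ} (hs₀ : -1 < s₀.re) :
    DifferentiableAt ℂ (fun s => ∑' n, em1 w s n) s₀ := by
  set r : ℝ := (s₀.re + 1) / 2 with hr_def
  have hr : 0 < r := by rw [hr_def]; linarith
  set a : ℝ := s₀.re - r with ha_def
  have ha : -1 < a := by rw [ha_def, hr_def]; linarith
  set R : ℝ := ‖s₀‖ + r with hR_def
  have hbound : ∀ n : ℕ, ∀ s ∈ Metric.ball s₀ r,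
      ‖em1 w s n‖ ≤ (R + 1) * ((R) * (R + 1)) * ((n : ℝ) + 1) ^ (-a - 2) := by
    intro n s hs
    have hsre : a < s.re := by
      have := Complex.abs_re_le_norm (s - s₀)
      rw [Metric.mem_ball, Complex.dist_eq] at hs
      have h2 : |s.re - s₀.re| < r := by
        calc |s.re - s₀.re| = |(s - s₀).re| := by rw [Complex.sub_re]
          _ ≤ ‖s - s₀‖ := Complex.abs_re_le_norm _
          _ < r := hs
      rw [abs_lt] at h2
      rw [ha_def]; linarith [h2.1]
    have hsnorm : ‖s‖ ≤ R := by
      rw [Metric.mem_ball, dist_eq_norm] at hs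
      calc ‖s‖ = ‖s₀ + (s - s₀)‖ := by ring_nf
        _ ≤ ‖s₀‖ + ‖s - s₀‖ := norm_add_le _ _
        _ ≤ R := by rw [hR_def]; linarith [hs.le]
    have h1 := em1_bound w hw s (by linarith) n
    refine h1.trans ?_
    have e1 : ‖s - 1‖ ≤ R + 1 := by
      calc ‖s - 1‖ ≤ ‖s‖ + ‖(1:ℂ)‖ := norm_sub_le _ _
        _ ≤ R + 1 := by rw [norm_one]; linarith
    have e2 : ‖s + 1‖ ≤ R + 1 := by
      calc ‖s + 1‖ ≤ ‖s‖ + ‖(1:ℂ)‖ := norm_add_le _ _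
        _ ≤ R + 1 := by rw [norm_one]; linarith
    have e3 : ((n : ℝ) + 1) ^ (-s.re - 2) ≤ ((n : ℝ) + 1) ^ (-a - 2) := by
      refine Real.rpow_le_rpow_of_exponent_le (by push_cast; linarith) (by linarith)
    have hnn : (0:ℝ) ≤ ((n : ℝ) + 1) ^ (-s.re - 2) := by positivity
    calc ‖s - 1‖ * (‖s‖ * ‖s + 1‖) * ((n:ℝ) + 1) ^ (-s.re - 2)
        ≤ (R + 1) * (R * (R + 1)) * ((n:ℝ) + 1) ^ (-s.re - 2) := by
          refine mul_le_mul_of_nonneg_right ?_ hnn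
          refine mul_le_mul e1 ?_ (by positivity) (by linarith [norm_nonneg s₀])
          exact mul_le_mul hsnorm e2 (norm_nonneg _) (by linarith [norm_nonneg s₀])
      _ ≤ (R + 1) * (R * (R + 1)) * ((n:ℝ) + 1) ^ (-a - 2) := by
          refine mul_le_mul_of_nonneg_left e3 ?_
          have h0R : 0 ≤ R := by positivity
          positivity
  have hsummable : Summable (fun n : ℕ => (R + 1) * ((R) * (R + 1)) * ((n : ℝ) + 1) ^ (-a - 2)) :=
    (summable_rpow_shift (by linarith)).mul_left _
  have hdiff := differentiableOn_tsum_of_summable_norm hsummable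
    (fun n => (em1_differentiable w hw n).differentiableOn)
    Metric.isOpen_ball (fun n s hs => hbound n s hs)
  exact hdiff.differentiableAt (Metric.isOpen_ball.mem_nhds (Metric.mem_ball_self hr))



lemma key_repr (w : ℝ) (hw : 1 ≤ w) (Z Q : ℂ → ℂ)
    (hQ : ∀ s : ℂ, -1 < s.re → DifferentiableAt ℂ Q s)
    (hQZ : ∀ s : ℂ, s ≠ 1 → Q s = (s - 1) * Z s)
    (hser : ∀ s : ℂ, 1 < s.re → HasSum (fun n : ℕ => (((n : ℝ) + w : ℝ) : ℂ) ^ (-s)) (Z s))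
    {σ : ℂ} (hσ : σ ≠ 1) (hσ' : -1 < σ.re) :
    Z σ = (w : ℂ) ^ (1 - σ) / (σ - 1) + (w : ℂ) ^ (-σ) / 2 + (∑' n, em1 w σ n) / (σ - 1) := by
  set U : Set ℂ := {s | -1 < s.re} with hU_def
  have hUopen : IsOpen U := isOpen_lt continuous_const Complex.continuous_re
  set L : ℂ → ℂ := fun s =>
    Q s - ((w : ℂ) ^ (1 - s) + (s - 1) * (w : ℂ) ^ (-s) / 2 + ∑' n, em1 w s n) with hL_def
  have hw0 : (w : ℂ) ≠ 0 := by
    simp only [ne_eq, ofReal_eq_zero]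
    intro h; rw [h] at hw; linarith
  have hLdiff : DifferentiableOn ℂ L U := by
    intro s hs
    refine DifferentiableAt.differentiableWithinAt ?_
    refine ((hQ s hs).sub ?_)
    refine (DifferentiableAt.add ?_ (phi_diff w hw hs))
    refine DifferentiableAt.add ?_ ?_
    · exact (Differentiable.const_cpow ((differentiable_const (1:ℂ)).sub differentiable_id)
        (Or.inl hw0)) s
    · exact (((differentiable_id.sub_const 1).differentiableAt).mul
        ((Differentiable.const_cpow differentiable_neg (Or.inl hw0)) s)).div_const 2
  have hLanal : AnalyticOnNhd ℂ L U := hLdiff.analyticOnNhd hUopen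
  have hzero : AnalyticOnNhd ℂ (fun _ : ℂ => (0:ℂ)) U := analyticOnNhd_const
  have hpre : IsPreconnected U := (convex_halfSpace_re_gt (-1)).isPreconnected
  have h2U : (2:ℂ) ∈ U := by simp [hU_def]; norm_num
  have hev : L =ᶠ[𝓝 (2:ℂ)] (fun _ => 0) := by
    have hVopen : IsOpen {s : ℂ | 1 < s.re} := isOpen_lt continuous_const Complex.continuous_re
    have h2V : (2:ℂ) ∈ {s : ℂ | 1 < s.re} := by
      simp only [Set.mem_setOf_eq]
      norm_num
    filter_upwards [hVopen.mem_nhds h2V] with s hs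
    have hs1 : s ≠ 1 := by
      intro h; rw [h] at hs; simp at hs
    have := hasSum_key w hw hs (hser s hs)
    rw [hL_def]
    simp only []
    rw [hQZ s hs1, this]
    ring
  have heq := hLanal.eqOn_of_preconnected_of_eventuallyEq hzero hpre h2U hev
  have hLσ : L σ = 0 := heq hσ'
  rw [hL_def] at hLσ
  simp only [] at hLσ
  have hσ1 : σ - 1 ≠ 0 := sub_ne_zero.mpr hσ
  rw [hQZ σ hσ] at hLσ
  have hgoal : (σ - 1) * Z σ =
      (↑w ^ (1 - σ) + (σ - 1) * ↑w ^ (-σ) / 2 + ∑' (n : ℕ), em1 w σ n) := by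
    linear_combination hLσ
  have hZ : Z σ = ((σ - 1) * Z σ) / (σ - 1) := (mul_div_cancel_left₀ _ hσ1).symm
  rw [hZ, hgoal]
  field_simp



-- Q for a given circle point and entire extra function E (entire: we use E = x^{-s} or 0)
noncomputable def QQ (a : UnitAddCircle) (E : ℂ → ℂ) (s : ℂ) : ℂ :=
  (s - 1) * (hurwitzZeta a s - 1 / (s - 1) * (Gammaℝ s)⁻¹ - E s) + (Gammaℝ s)⁻¹

lemma QQ_diff (a : UnitAddCircle) (E : ℂ → ℂ) (hE : Differentiable ℂ E) (s : ℂ) :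
    DifferentiableAt ℂ (QQ a E) s := by
  have hGinv : Differentiable ℂ fun s : ℂ => (Gammaℝ s)⁻¹ := differentiable_Gammaℝ_inv
  rcases eq_or_ne s 1 with rfl | hs1
  · have h1 : DifferentiableAt ℂ (fun s => hurwitzZeta a s - 1 / (s - 1) * (Gammaℝ s)⁻¹) 1 := by
      have := differentiableAt_hurwitzZeta_sub_one_div a
      have hfun : (fun s => hurwitzZeta a s - 1 / (s - 1) / Gammaℝ s)
          = fun s => hurwitzZeta a s - 1 / (s - 1) * (Gammaℝ s)⁻¹ := by
        funext s; rw [div_eq_mul_inv]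
      rwa [hfun] at this
    exact (((differentiableAt_id.sub_const 1).mul (h1.sub (hE 1))).add (hGinv 1))
  · have h2 : DifferentiableAt ℂ (fun s => hurwitzZeta a s - 1 / (s - 1) * (Gammaℝ s)⁻¹) s := by
      refine (differentiableAt_hurwitzZeta a hs1).sub ?_
      refine DifferentiableAt.mul ?_ (hGinv s)
      exact (differentiableAt_const 1).div (differentiableAt_id.sub_const 1)
        (sub_ne_zero.mpr hs1)
    exact (((differentiableAt_id.sub_const 1).mul (h2.sub (hE s))).add (hGinv s))

lemma QQ_eq (a : UnitAddCircle) (E : ℂ → ℂ) {s : ℂ} (hs1 : s ≠ 1) :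
    QQ a E s = (s - 1) * (hurwitzZeta a s - E s) := by
  rw [QQ]
  have h : s - 1 ≠ 0 := sub_ne_zero.mpr hs1
  have hb : (s - 1) * (1 / (s - 1) * (Gammaℝ s)⁻¹) = (Gammaℝ s)⁻¹ := by
    rw [← mul_assoc, mul_one_div, div_self h, one_mul]
  linear_combination -hb

lemma hser_x {x : ℝ} (hx : x ∈ Set.Ioo (0:ℝ) 1) {s : ℂ} (hs : 1 < s.re) :
    HasSum (fun n : ℕ => (((n : ℝ) + (1 + x) : ℝ) : ℂ) ^ (-s))
      (hurwitzZeta (x : UnitAddCircle) s - (x : ℂ) ^ (-s)) := by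
  have h0 := hasSum_hurwitzZeta_of_one_lt_re (a := x) ⟨hx.1.le, hx.2.le⟩ hs
  set f : ℕ → ℂ := fun n => 1 / ((n : ℂ) + (x : ℂ)) ^ s with hf
  have hshift : HasSum (fun n => f (n + 1))
      (hurwitzZeta (x : UnitAddCircle) s - f 0) := by
    refine (hasSum_nat_add_iff 1).mpr ?_
    simpa using h0
  have hf0 : f 0 = (x : ℂ) ^ (-s) := by
    rw [hf]
    simp only [Nat.cast_zero, zero_add]
    rw [cpow_neg, one_div]
  rw [hf0] at hshift
  refine hshift.congr_fun fun n => ?_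
  rw [hf]
  have hc : ((((n : ℝ) + (1 + x) : ℝ)) : ℂ) = ((n + 1 : ℕ) : ℂ) + (x : ℂ) := by
    push_cast; ring
  rw [cpow_neg, hc]
  simp

lemma hser_0 {s : ℂ} (hs : 1 < s.re) :
    HasSum (fun n : ℕ => (((n : ℝ) + 1 : ℝ) : ℂ) ^ (-s)) (riemannZeta s) := by
  have h0 := hasSum_hurwitzZeta_of_one_lt_re (a := (0:ℝ)) ⟨le_refl 0, zero_le_one⟩ hs
  set f : ℕ → ℂ := fun n => 1 / ((n : ℂ) + ((0:ℝ) : ℂ)) ^ s with hf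
  have hshift : HasSum (fun n => f (n + 1)) (hurwitzZeta ((0:ℝ) : UnitAddCircle) s - f 0) := by
    refine (hasSum_nat_add_iff 1).mpr ?_
    simpa using h0
  have hf0 : f 0 = 0 := by
    rw [hf]
    simp only [Nat.cast_zero, zero_add, ofReal_zero]
    rw [zero_cpow (by intro h; rw [h] at hs; simp at hs; linarith)]
    simp
  have hz : hurwitzZeta ((0:ℝ) : UnitAddCircle) s = riemannZeta s := by
    have : ((0:ℝ) : UnitAddCircle) = 0 := by norm_num
    rw [this, hurwitzZeta_zero]
  rw [hf0, hz, sub_zero] at hshift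
  refine hshift.congr_fun fun n => ?_
  rw [hf]
  have hc : ((((n : ℝ) + 1 : ℝ)) : ℂ) = ((n + 1 : ℕ) : ℂ) + ((0:ℝ) : ℂ) := by
    push_cast; ring
  rw [cpow_neg, hc]
  simp

lemma repr_x {x : ℝ} (hx : x ∈ Set.Ioo (0:ℝ) 1) {σ : ℂ} (hσ : σ ≠ 1) (hσ' : -1 < σ.re) :
    hurwitzZeta (x : UnitAddCircle) σ - (x : ℂ) ^ (-σ)
      = ((1 + x : ℝ) : ℂ) ^ (1 - σ) / (σ - 1) + ((1 + x : ℝ) : ℂ) ^ (-σ) / 2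
        + (∑' n, em1 (1 + x) σ n) / (σ - 1) := by
  have hx0 : (x : ℂ) ≠ 0 := by
    simp only [ne_eq, ofReal_eq_zero]
    exact ne_of_gt hx.1
  have hE : Differentiable ℂ (fun s : ℂ => (x : ℂ) ^ (-s)) :=
    Differentiable.const_cpow differentiable_neg (Or.inl hx0)
  exact key_repr (1 + x) (by linarith [hx.1]) _ (QQ (x : UnitAddCircle) (fun s => (x:ℂ) ^ (-s)))
    (fun s _ => QQ_diff _ _ hE s) (fun s hs1 => QQ_eq _ _ hs1)
    (fun s hs => hser_x hx hs) hσ hσ'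

lemma repr_0 {σ : ℂ} (hσ : σ ≠ 1) (hσ' : -1 < σ.re) :
    riemannZeta σ = (1 : ℂ) ^ (1 - σ) / (σ - 1) + (1 : ℂ) ^ (-σ) / 2
        + (∑' n, em1 1 σ n) / (σ - 1) := by
  have h := key_repr 1 le_rfl (fun s => riemannZeta s) (QQ 0 (fun _ => 0))
    (fun s _ => QQ_diff _ _ (differentiable_const 0) s)
    (fun s hs1 => by
      rw [QQ_eq _ _ hs1, hurwitzZeta_zero]
      ring)
    (fun s hs => hser_0 hs) hσ hσ'
  simpa using h

lemma tendsto_cpow_base (c : ℝ) (hc : 0 < c) (z : ℂ) :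
    Tendsto (fun x : ℝ => ((c + x : ℝ) : ℂ) ^ z) (𝓝[Set.Ioo (0:ℝ) 1] 0)
      (𝓝 (((c : ℝ) : ℂ) ^ z)) := by
  have h1 : Tendsto (fun x : ℝ => ((c + x : ℝ) : ℂ)) (𝓝 (0:ℝ)) (𝓝 ((c : ℝ) : ℂ)) := by
    have : Continuous (fun x : ℝ => ((c + x : ℝ) : ℂ)) :=
      Complex.continuous_ofReal.comp (continuous_const.add continuous_id)
    simpa using this.tendsto 0
  have h2 : ContinuousAt (fun z' : ℂ => z' ^ z) ((c : ℝ) : ℂ) :=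
    continuousAt_cpow_const (Or.inl (by simpa using hc))
  exact (h2.tendsto.comp h1).mono_left nhdsWithin_le_nhds

lemma caseA {σ : ℂ} (hσ : σ ≠ 1) (hσ' : -1 < σ.re) :
    Tendsto (fun x : ℝ => hurwitzZeta (x : UnitAddCircle) σ - (x : ℂ) ^ (-σ))
      (𝓝[Set.Ioo (0:ℝ) 1] 0) (𝓝 (riemannZeta σ)) := by
  have hT3 : Tendsto (fun x : ℝ => ∑' n, em1 (1 + x) σ n) (𝓝[Set.Ioo (0:ℝ) 1] 0)
      (𝓝 (∑' n, em1 1 σ n)) := by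
    refine tendsto_tsum_of_dominated_convergence
      (bound := fun k : ℕ => ‖σ - 1‖ * (‖σ‖ * ‖σ + 1‖) * ((k : ℝ) + 1) ^ (-σ.re - 2))
      ((summable_rpow_shift (by linarith)).mul_left _) (fun k => ?_) ?_
    · simp only [em1_def]
      have a1 : ∀ x : ℝ, (k : ℝ) + (1 + x) = ((k : ℝ) + 1) + x := fun x => by ring
      have a2 : ∀ x : ℝ, (k : ℝ) + 1 + (1 + x) = ((k : ℝ) + 2) + x := fun x => by ring
      have a3 : (k : ℝ) + 1 + 1 = (k : ℝ) + 2 := by ring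
      simp only [a1, a2, a3]
      have e1 := tendsto_cpow_base ((k : ℝ) + 1) (by positivity) (-σ)
      have e2 := tendsto_cpow_base ((k : ℝ) + 2) (by positivity) (-σ)
      have e3 := tendsto_cpow_base ((k : ℝ) + 2) (by positivity) (1 - σ)
      have e4 := tendsto_cpow_base ((k : ℝ) + 1) (by positivity) (1 - σ)
      have hadd : (k : ℝ) + 1 + (0:ℝ) = (k:ℝ) + 1 := by ring
      exact Tendsto.add (((e1.add e2).const_mul (σ - 1)).div_const 2) (e3.sub e4)
    · filter_upwards [self_mem_nhdsWithin] with x hx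
      intro k
      exact em1_bound (1 + x) (by linarith [hx.1]) σ (by linarith) k
  have hT1 := (tendsto_cpow_base 1 one_pos (1 - σ)).div_const (σ - 1)
  have hT2 := (tendsto_cpow_base 1 one_pos (-σ)).div_const 2
  have hRHS := (hT1.add hT2).add (hT3.div_const (σ - 1))
  simp only [Complex.ofReal_one] at hRHS
  rw [← repr_0 hσ hσ'] at hRHS
  refine hRHS.congr' ?_
  filter_upwards [self_mem_nhdsWithin] with x hx
  exact (repr_x hx hσ hσ').symm


lemma expZeta_tendsto {s : ℂ} (hs : 2 ≤ s.re) (c : ℝ) :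
    Tendsto (fun x : ℝ => expZeta ((c * x : ℝ) : UnitAddCircle) s) (𝓝[Set.Ioo (0:ℝ) 1] 0)
      (𝓝 (expZeta 0 s)) := by
  have hs1 : 1 < s.re := by linarith
  have hs0 : s ≠ 0 := by intro h; rw [h] at hs1; simp at hs1; linarith
  have hfun : ∀ x : ℝ, expZeta ((c * x : ℝ) : UnitAddCircle) s
      = ∑' n : ℕ, cexp (2 * (Real.pi : ℂ) * I * ((c * x : ℝ) : ℂ) * (n : ℂ)) / (n : ℂ) ^ s :=
    fun x => (hasSum_expZeta_of_one_lt_re (c * x) hs1).tsum_eq.symm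
  have h0 : expZeta 0 s
      = ∑' n : ℕ, cexp (2 * (Real.pi : ℂ) * I * ((c * (0:ℝ) : ℝ) : ℂ) * (n : ℂ)) / (n : ℂ) ^ s := by
    have h := (hasSum_expZeta_of_one_lt_re (0:ℝ) hs1).tsum_eq.symm
    rw [show (((0:ℝ)) : UnitAddCircle) = 0 by norm_num] at h
    rw [h]
    congr 1
    funext n
    norm_num
  simp only [hfun]
  rw [h0]
  refine tendsto_tsum_of_dominated_convergence
    (bound := fun n : ℕ => (n : ℝ) ^ (-s.re)) ?_ (fun k => ?_) ?_
  · exact Real.summable_nat_rpow.mpr (by linarith)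
  · have hcont : Continuous fun x : ℝ =>
        cexp (2 * (Real.pi : ℂ) * I * ((c * x : ℝ) : ℂ) * (k : ℂ)) / (k : ℂ) ^ s := by
      refine Continuous.div_const ?_ _
      refine Complex.continuous_exp.comp ?_
      refine Continuous.mul (Continuous.mul continuous_const ?_) continuous_const
      exact Complex.continuous_ofReal.comp (continuous_const.mul continuous_id)
    exact (hcont.tendsto 0).mono_left nhdsWithin_le_nhds
  · refine Filter.Eventually.of_forall fun x => fun k => ?_
    rcases Nat.eq_zero_or_pos k with rfl | hk
    · simp only [Nat.cast_zero]
      rw [zero_cpow hs0, div_zero, norm_zero, Real.zero_rpow (by linarith)]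
    · rw [norm_div]
      have hnum : ‖cexp (2 * (Real.pi : ℂ) * I * ((c * x : ℝ) : ℂ) * (k : ℂ))‖ = 1 := by
        rw [Complex.norm_exp]
        have : (2 * (Real.pi : ℂ) * I * ((c * x : ℝ) : ℂ) * (k : ℂ)).re = 0 := by
          simp [Complex.mul_re, Complex.mul_im]
        rw [this, Real.exp_zero]
      have hden : ‖(k : ℂ) ^ s‖ = (k : ℝ) ^ s.re := by
        rw [show ((k : ℕ) : ℂ) = (((k : ℝ)) : ℂ) by push_cast; rfl,
          Complex.norm_cpow_eq_rpow_re_of_pos (by positivity)]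
      have hb : (fun n : ℕ => ((n:ℝ)) ^ (-s.re)) k = ((k:ℝ) ^ s.re)⁻¹ := by
        simp [Real.rpow_neg (Nat.cast_nonneg k)]
      rw [hnum, hden, one_div]; exact hb.symm.le

lemma caseB {σ : ℂ} (hσ' : σ.re ≤ -1) :
    Tendsto (fun x : ℝ => hurwitzZeta (x : UnitAddCircle) σ - (x : ℂ) ^ (-σ))
      (𝓝[Set.Ioo (0:ℝ) 1] 0) (𝓝 (riemannZeta σ)) := by
  set s : ℂ := 1 - σ with hs_def
  have hsre : 2 ≤ s.re := by
    rw [hs_def]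
    simp only [Complex.sub_re, Complex.one_re]
    linarith
  have hs1 : s ≠ 1 := by
    intro h
    rw [h] at hsre
    norm_num at hsre
  have hsn : ∀ n : ℕ, s ≠ -n := by
    intro n h
    rw [h] at hsre
    simp only [Complex.neg_re, Complex.natCast_re] at hsre
    have : (0:ℝ) ≤ n := Nat.cast_nonneg n
    linarith
  have hσs : σ = 1 - s := by rw [hs_def]; ring
  -- FE for each a
  have hFE : ∀ a : UnitAddCircle, hurwitzZeta a σ = (2 * (Real.pi : ℂ)) ^ (-s) * Complex.Gamma s *
      (cexp (-(Real.pi : ℂ) * I * s / 2) * expZeta a s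
        + cexp ((Real.pi : ℂ) * I * s / 2) * expZeta (-a) s) := by
    intro a
    rw [hσs]
    exact hurwitzZeta_one_sub a hsn (Or.inr hs1)
  -- limit of x^(-σ)
  have hx0 : Tendsto (fun x : ℝ => (x : ℂ) ^ (-σ)) (𝓝[Set.Ioo (0:ℝ) 1] 0) (𝓝 0) := by
    rw [tendsto_zero_iff_norm_tendsto_zero]
    have hbnd : ∀ x ∈ Set.Ioo (0:ℝ) 1, ‖(x : ℂ) ^ (-σ)‖ = x ^ (-σ.re) := by
      intro x hx
      rw [Complex.norm_cpow_eq_rpow_re_of_pos hx.1, Complex.neg_re]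
    have hrp : Tendsto (fun x : ℝ => x ^ (-σ.re)) (𝓝[Set.Ioo (0:ℝ) 1] 0) (𝓝 0) := by
      have hc : ContinuousAt (fun x : ℝ => x ^ (-σ.re)) 0 :=
        Real.continuousAt_rpow_const 0 (-σ.re) (Or.inr (by linarith))
      have := hc.tendsto.mono_left (nhdsWithin_le_nhds (s := Set.Ioo (0:ℝ) 1))
      rwa [Real.zero_rpow (by linarith)] at this
    refine hrp.congr' ?_
    filter_upwards [self_mem_nhdsWithin] with x hx
    exact (hbnd x hx).symm
  -- limits of expZeta parts
  have he1 : Tendsto (fun x : ℝ => expZeta ((x : ℝ) : UnitAddCircle) s)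
      (𝓝[Set.Ioo (0:ℝ) 1] 0) (𝓝 (expZeta 0 s)) := by
    have h := expZeta_tendsto hsre 1
    have hone : ∀ x : ℝ, (1:ℝ) * x = x := fun x => one_mul x
    simp only [hone] at h
    exact h
  have he2 : Tendsto (fun x : ℝ => expZeta (-((x : ℝ) : UnitAddCircle)) s)
      (𝓝[Set.Ioo (0:ℝ) 1] 0) (𝓝 (expZeta 0 s)) := by
    have h := expZeta_tendsto hsre (-1)
    have hcast : ∀ x : ℝ, (((-1 : ℝ) * x : ℝ) : UnitAddCircle) = -((x : ℝ) : UnitAddCircle) := by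
      intro x
      have : ((-1 : ℝ) * x) = -x := by ring
      rw [this]
      simp
    simp only [hcast] at h
    simpa using h
  -- assemble
  have hmain : Tendsto (fun x : ℝ => hurwitzZeta ((x : ℝ) : UnitAddCircle) σ)
      (𝓝[Set.Ioo (0:ℝ) 1] 0) (𝓝 (riemannZeta σ)) := by
    have hcomb := ((he1.const_mul (cexp (-(Real.pi : ℂ) * I * s / 2))).add
      (he2.const_mul (cexp ((Real.pi : ℂ) * I * s / 2)))).const_mul
      ((2 * (Real.pi : ℂ)) ^ (-s) * Complex.Gamma s)
    have hval : (2 * (Real.pi : ℂ)) ^ (-s) * Complex.Gamma s *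
        (cexp (-(Real.pi : ℂ) * I * s / 2) * expZeta 0 s
          + cexp ((Real.pi : ℂ) * I * s / 2) * expZeta (-0) s) = riemannZeta σ := by
      rw [← hFE 0, hurwitzZeta_zero]
    rw [show (-(0 : UnitAddCircle)) = 0 by norm_num] at hval
    rw [← hval]
    refine hcomb.congr fun x => ?_
    rw [hFE ((x : ℝ) : UnitAddCircle)]
  have := hmain.sub hx0
  simpa using this


theorem stmt6 (σ : ℂ) (hσ : σ ≠ 1) :
    Filter.Tendsto (fun x : ℝ => hurwitzZeta (x : UnitAddCircle) σ - (x : ℂ) ^ (-σ))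
      (nhdsWithin 0 (Set.Ioo 0 1)) (nhds (riemannZeta σ)) := by
  rcases lt_or_ge (-1 : ℝ) σ.re with h | h
  · exact caseA hσ h
  · exact caseB h
end
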